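/- One-dimensional discrete Noether theorem: if a local Lagrangian L on the path with N edges is invariant under the infinitesimal transformation Δ, i.e. (d/dt) L[φ + tΔ](k) |_{t=0} = 0 for every vertex k, and φ is stationary for Σ_{k=0}^N L[φ](k), then the current j(k) := ∂L[φ]/∂(δφ)(k) · Δ(k−1) is constant in k for 1 ≤ k ≤ N. -/

import Mathlib

/-- **One-dimensional discrete Noether theorem.**
`L` is a local Lagrangian on the path `0,…,N`: `L[φ](k) = L k (φ k) (φ k − φ (k−1))`
with differentiable `L k` (partial derivatives `p1`, `p2` in the first and second
argument).  If `L` is invariant under the infinitesimal transformation `Δ`, i.e.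
`(d/dt) L[φ + tΔ](k) |_{t=0} = 0` for every vertex `k`, and `φ` is stationary
for `∑_{k=0}^N L[φ](k)`, then the current
`j(k) = ∂L[φ]/∂(δφ)(k) · Δ(k−1)` is constant in `k` for `1 ≤ k ≤ N`. -/
theorem discrete_noether_1d (N : ℕ) (L : ℕ → ℝ → ℝ → ℝ)
    (p1 p2 : ℕ → ℝ → ℝ → ℝ)
    (hd : ∀ k a b, HasFDerivAt (fun z : ℝ × ℝ => L k z.1 z.2)
      (p1 k a b • ContinuousLinearMap.fst ℝ ℝ ℝ +
       p2 k a b • ContinuousLinearMap.snd ℝ ℝ ℝ) (a, b))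
    (φ Δ : ℕ → ℝ)
    (hinv : ∀ k ≤ N, HasDerivAt (fun t : ℝ =>
        L k (φ k + t * Δ k) ((φ k + t * Δ k) - (φ (k - 1) + t * Δ (k - 1)))) 0 0)
    (hstat : ∀ j ≤ N, HasDerivAt (fun x : ℝ => ∑ k ∈ Finset.range (N + 1),
        L k (Function.update φ j x k)
          (Function.update φ j x k - Function.update φ j x (k - 1))) 0 (φ j)) :
    ∀ k l, 1 ≤ k → k ≤ N → 1 ≤ l → l ≤ N →
      p2 k (φ k) (φ k - φ (k - 1)) * Δ (k - 1)
        = p2 l (φ l) (φ l - φ (l - 1)) * Δ (l - 1) := by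
  -- Scalar form of the invariance hypothesis.
  have hinv' : ∀ k, k ≤ N →
      p1 k (φ k) (φ k - φ (k - 1)) * Δ k
        + p2 k (φ k) (φ k - φ (k - 1)) * (Δ k - Δ (k - 1)) = 0 := by
    intro k hkN
    have h1 : HasDerivAt (fun t : ℝ => φ k + t * Δ k) (Δ k) 0 := by
      simpa using ((hasDerivAt_id (0:ℝ)).mul_const (Δ k)).const_add (φ k)
    have h2 : HasDerivAt (fun t : ℝ => (φ k + t * Δ k) - (φ (k - 1) + t * Δ (k - 1)))
        (Δ k - Δ (k - 1)) 0 := by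
      have h3 : HasDerivAt (fun t : ℝ => φ (k-1) + t * Δ (k-1)) (Δ (k-1)) 0 := by
        simpa using ((hasDerivAt_id (0:ℝ)).mul_const (Δ (k-1))).const_add (φ (k-1))
      exact h1.sub h3
    have hc := h1.prodMk h2
    have hF := hd k (φ k) (φ k - φ (k-1))
    have hcomp := HasFDerivAt.comp_hasDerivAt 0 (by simpa using hF) hc
    have huniq := (hinv k hkN).unique hcomp
    simp [Function.comp] at huniq
    linarith [huniq]
  -- Scalar form of the Euler–Lagrange equations (interior vertices).
  have hEL : ∀ j, 1 ≤ j → j + 1 ≤ N →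
      p1 j (φ j) (φ j - φ (j - 1)) + p2 j (φ j) (φ j - φ (j - 1))
        - p2 (j+1) (φ (j+1)) (φ (j+1) - φ j) = 0 := by
    intro j hj1 hjN
    set d : ℕ → ℝ := fun k =>
      (if k = j then p1 j (φ j) (φ j - φ (j-1)) + p2 j (φ j) (φ j - φ (j-1)) else 0)
      + (if k = j + 1 then -p2 (j+1) (φ (j+1)) (φ (j+1) - φ j) else 0) with hdd
    have key : ∀ k ∈ Finset.range (N+1), HasDerivAt (fun x : ℝ =>
        L k (Function.update φ j x k)
          (Function.update φ j x k - Function.update φ j x (k - 1))) (d k) (φ j) := by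
      intro k _
      rcases eq_or_ne k j with rfl | hkj
      · have hne : k - 1 ≠ k := by omega
        have hfun : (fun x : ℝ => L k (Function.update φ k x k)
            (Function.update φ k x k - Function.update φ k x (k - 1)))
            = fun x : ℝ => L k x (x - φ (k-1)) := by
          funext x
          simp [Function.update_self, Function.update_of_ne hne]
        rw [hfun]
        have hc : HasDerivAt (fun x : ℝ => ((x, x - φ (k-1)) : ℝ × ℝ)) ((1, 1) : ℝ × ℝ) (φ k) :=
          (hasDerivAt_id _).prodMk ((hasDerivAt_id _).sub_const _)
        have hcomp := HasFDerivAt.comp_hasDerivAt (φ k) (hd k (φ k) (φ k - φ (k-1))) hc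
        have : d k = p1 k (φ k) (φ k - φ (k-1)) + p2 k (φ k) (φ k - φ (k-1)) := by
          simp [hdd]
        rw [this]
        exact hcomp.congr_deriv (by simp)
      · rcases eq_or_ne k (j+1) with rfl | hkj1
        · have h1 : j + 1 - 1 = j := by omega
          have hfun : (fun x : ℝ => L (j+1) (Function.update φ j x (j+1))
              (Function.update φ j x (j+1) - Function.update φ j x (j+1-1)))
              = fun x : ℝ => L (j+1) (φ (j+1)) (φ (j+1) - x) := by
            funext x
            simp [h1, Function.update_of_ne hkj, Function.update_self]
          rw [hfun]
          have hc : HasDerivAt (fun x : ℝ => ((φ (j+1), φ (j+1) - x) : ℝ × ℝ))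
              ((0, -1) : ℝ × ℝ) (φ j) :=
            (hasDerivAt_const _ _).prodMk ((hasDerivAt_id _).const_sub _)
          have hcomp := HasFDerivAt.comp_hasDerivAt (φ j)
            (hd (j+1) (φ (j+1)) (φ (j+1) - φ j)) hc
          have : d (j+1) = -p2 (j+1) (φ (j+1)) (φ (j+1) - φ j) := by
            simp [hdd]
          rw [this]
          exact hcomp.congr_deriv (by simp)
        · have hne1 : k - 1 ≠ j := by omega
          have hfun : (fun x : ℝ => L k (Function.update φ j x k)
              (Function.update φ j x k - Function.update φ j x (k - 1)))
              = fun _ : ℝ => L k (φ k) (φ k - φ (k-1)) := by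
            funext x
            simp [Function.update_of_ne hkj, Function.update_of_ne hne1]
          rw [hfun]
          have : d k = 0 := by simp [hdd, hkj, hkj1]
          rw [this]
          exact hasDerivAt_const _ _
    have hsum := HasDerivAt.fun_sum key
    have huniq := (hstat j (by omega)).unique hsum
    have hsval : ∑ k ∈ Finset.range (N+1), d k
        = p1 j (φ j) (φ j - φ (j-1)) + p2 j (φ j) (φ j - φ (j-1))
          + (-p2 (j+1) (φ (j+1)) (φ (j+1) - φ j)) := by
      rw [hdd]
      rw [Finset.sum_add_distrib, Finset.sum_ite_eq', Finset.sum_ite_eq',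
        if_pos (Finset.mem_range.mpr (by omega : j < N + 1)),
        if_pos (Finset.mem_range.mpr (by omega : j + 1 < N + 1))]
    rw [hsval] at huniq
    linarith
  -- The current is constant step by step.
  have hstep : ∀ k, 1 ≤ k → k + 1 ≤ N →
      p2 k (φ k) (φ k - φ (k - 1)) * Δ (k - 1)
        = p2 (k+1) (φ (k+1)) (φ (k+1) - φ (k+1-1)) * Δ (k+1-1) := by
    intro k hk1 hkN
    have e1 := hinv' k (by omega)
    have e2 := hEL k hk1 hkN
    simp only [Nat.add_sub_cancel]
    linear_combination (-1 : ℝ) * e1 + Δ k * e2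
  -- Everything equals the current at `1`.
  have hbase : ∀ k, 1 ≤ k → k ≤ N →
      p2 k (φ k) (φ k - φ (k - 1)) * Δ (k - 1)
        = p2 1 (φ 1) (φ 1 - φ 0) * Δ 0 := by
    intro k hk1
    induction k with
    | zero => omega
    | succ n ih =>
      intro hkN
      rcases Nat.eq_zero_or_pos n with rfl | hn
      · norm_num
      · have := hstep n hn (by omega)
        rw [← this]
        exact ih (by omega) (by omega)
  intro k l hk1 hkN hl1 hlN
  rw [hbase k hk1 hkN, hbase l hl1 hlN]
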